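/- Let X : Δᵒᵖ → Set be a continuous simplicial set. Under the identification of Xₙ with chains (x₀, …, xₙ) in (X₀, ≤_X), the face map dᵢ : Xₙ → Xₙ₋₁ is given by deleting the i-th entry: dᵢ(x₀, …, xₙ) = (x₀, …, xᵢ₋₁, xᵢ₊₁, …, xₙ). In particular, the relation ≤_X is transitive. -/

import Mathlib

open CategoryTheory Limits Opposite

/-- A simplicial set `X : Δᵒᵖ ⥤ Type` is *continuous* if it preserves all limits that
exist in `Δᵒᵖ`; equivalently, it takes colimits in `Δ` to limits in `Set`. -/
def IsContinuousSSet (X : SimplexCategoryᵒᵖ ⥤ Type) : Prop :=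
  ∀ ⦃J : Type⦄ [SmallCategory J] (D : J ⥤ SimplexCategoryᵒᵖ) (c : Cone D),
    Nonempty (IsLimit c) → Nonempty (IsLimit (X.mapCone c))

/-- The relation `≤_X` on the `0`-simplices of a simplicial set `X`:
`x ≤_X y` iff there is a `1`-simplex `f` with `d₁ f = x` and `d₀ f = y`. -/
def sSetLe (X : SimplexCategoryᵒᵖ ⥤ Type) (x y : X.obj (op (SimplexCategory.mk 0))) : Prop :=
  ∃ f : X.obj (op (SimplexCategory.mk 1)),
    X.map (SimplexCategory.δ 1).op f = x ∧ X.map (SimplexCategory.δ 0).op f = y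

/-- The `i`-th vertex of an `n`-simplex `σ`: the image of `σ` under the map induced by
the monotone map `[0] → [n]` picking out `i`. -/
def vertex (X : SimplexCategoryᵒᵖ ⥤ Type) (n : ℕ) (σ : X.obj (op (SimplexCategory.mk n)))
    (i : Fin (n + 1)) : X.obj (op (SimplexCategory.mk 0)) :=
  X.map (SimplexCategory.const (SimplexCategory.mk 0) (SimplexCategory.mk n) i).op σ

namespace Aux9

open SimplexCategory

lemma comm0 : (δ (2 : Fin 3)).op ≫ (δ (0 : Fin 2)).op =
    (δ (0 : Fin 3)).op ≫ (δ (1 : Fin 2)).op := by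
  rw [← op_comp, ← op_comp]
  congr 1
  ext i
  fin_cases i
  decide

/-- `op [2]` with the two faces is a pullback of `d₀, d₁ : op [1] ⟶ op [0]` in `Δᵒᵖ`. -/
noncomputable def isLimitCone :
    IsLimit (PullbackCone.mk (f := (δ (0 : Fin 2)).op) (g := (δ (1 : Fin 2)).op)
      ((δ (2 : Fin 3)).op) ((δ (0 : Fin 3)).op) comm0) := by
  apply PullbackCone.IsLimit.mk comm0
    (lift := fun s => by
      refine Quiver.Hom.op (SimplexCategory.Hom.mk
        ⟨![s.fst.unop.toOrderHom 0, s.fst.unop.toOrderHom 1, s.snd.unop.toOrderHom 1], ?_⟩)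
      have key : s.fst.unop.toOrderHom 1 = s.snd.unop.toOrderHom 0 := by
        have := congrArg (fun (h : s.pt ⟶ op (SimplexCategory.mk 0)) =>
          h.unop.toOrderHom 0) s.condition
        simpa [SimplexCategory.δ, Fin.succAbove, Fin.ext_iff] using this
      have h1 : s.fst.unop.toOrderHom 0 ≤ s.fst.unop.toOrderHom 1 :=
        s.fst.unop.toOrderHom.monotone (by decide)
      have h2 : s.snd.unop.toOrderHom 0 ≤ s.snd.unop.toOrderHom 1 :=
        s.snd.unop.toOrderHom.monotone (by decide)
      intro a b hab
      fin_cases a <;> fin_cases b <;>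
        simp_all <;> first | exact h1.trans (key ▸ h2) | omega)
  · intro s
    apply Quiver.Hom.unop_inj
    ext i
    fin_cases i <;> rfl
  · intro s
    have key : s.fst.unop.toOrderHom 1 = s.snd.unop.toOrderHom 0 := by
      have := congrArg (fun (h : s.pt ⟶ op (SimplexCategory.mk 0)) =>
        h.unop.toOrderHom 0) s.condition
      simpa [SimplexCategory.δ, Fin.succAbove, Fin.ext_iff] using this
    apply Quiver.Hom.unop_inj
    ext i
    fin_cases i
    · exact congrArg Fin.val key
    · rfl
  · intro s m h1 h2
    apply Quiver.Hom.unop_inj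
    ext i
    fin_cases i
    · have := congrArg (fun (h : s.pt ⟶ op (SimplexCategory.mk 1)) =>
        h.unop.toOrderHom 0) h1
      exact congrArg Fin.val this
    · have := congrArg (fun (h : s.pt ⟶ op (SimplexCategory.mk 1)) =>
        h.unop.toOrderHom 1) h1
      exact congrArg Fin.val this
    · have := congrArg (fun (h : s.pt ⟶ op (SimplexCategory.mk 1)) =>
        h.unop.toOrderHom 1) h2
      exact congrArg Fin.val this

end Aux9

/-- Let `X : Δᵒᵖ → Set` be a continuous simplicial set. Under the
identification of `Xₙ` with chains `(x₀, …, xₙ)` in `(X₀, ≤_X)` via the vertex maps,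
the face map `dᵢ : Xₙ → Xₙ₋₁` is given by deleting the `i`-th entry:
`dᵢ(x₀, …, xₙ) = (x₀, …, xᵢ₋₁, xᵢ₊₁, …, xₙ)` (i.e. the `j`-th vertex of `dᵢ σ` is the
`δᵢ(j)`-th vertex of `σ`). In particular, the relation `≤_X` is transitive. -/
theorem face_maps_delete_and_le_transitive (X : SimplexCategoryᵒᵖ ⥤ Type)
    (hX : IsContinuousSSet X) :
    (∀ (n : ℕ) (i : Fin (n + 2)) (σ : X.obj (op (SimplexCategory.mk (n + 1))))
      (j : Fin (n + 1)),
      vertex X n (X.map (SimplexCategory.δ i).op σ) j = vertex X (n + 1) σ (i.succAbove j)) ∧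
    Transitive (sSetLe X) := by
  constructor
  · intro n i σ j
    unfold vertex
    rw [← FunctorToTypes.map_comp_apply, ← op_comp, SimplexCategory.const_comp]
    rfl
  · rintro x y z ⟨f, hf1, hf2⟩ ⟨g, hg1, hg2⟩
    obtain ⟨hL⟩ := hX _ _ ⟨Aux9.isLimitCone⟩
    have hL' := (isLimitMapConePullbackConeEquiv X Aux9.comm0) hL
    have comm : TypeCat.ofHom (fun _ : PUnit => f) ≫ X.map (SimplexCategory.δ (0 : Fin 2)).op
        = TypeCat.ofHom (fun _ : PUnit => g) ≫ X.map (SimplexCategory.δ (1 : Fin 2)).op :=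
      by
        ext _
        show X.map (SimplexCategory.δ (0 : Fin 2)).op f
          = X.map (SimplexCategory.δ (1 : Fin 2)).op g
        rw [hf2, hg1]
    obtain ⟨l, hl1, hl2⟩ := PullbackCone.IsLimit.lift' hL' _ _ comm
    obtain ⟨t, ht⟩ : ∃ t : X.obj (op (SimplexCategory.mk 2)), l PUnit.unit = t := ⟨_, rfl⟩
    have hf : X.map (SimplexCategory.δ (2 : Fin 3)).op t = f := by
      subst ht; exact types_congr_hom hl1 PUnit.unit
    have hg : X.map (SimplexCategory.δ (0 : Fin 3)).op t = g := by
      subst ht; exact types_congr_hom hl2 PUnit.unit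
    refine ⟨X.map (SimplexCategory.δ (1 : Fin 3)).op t, ?_, ?_⟩
    · rw [← hf1, ← hf, ← FunctorToTypes.map_comp_apply, ← FunctorToTypes.map_comp_apply,
        ← op_comp, ← op_comp]
      have h12 : SimplexCategory.δ (1 : Fin 2) ≫ SimplexCategory.δ (1 : Fin 3)
          = SimplexCategory.δ (1 : Fin 2) ≫ SimplexCategory.δ (2 : Fin 3) := by
        ext i; fin_cases i; decide
      rw [h12]
    · rw [← hg2, ← hg, ← FunctorToTypes.map_comp_apply, ← FunctorToTypes.map_comp_apply,
        ← op_comp, ← op_comp]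
      have h12 : SimplexCategory.δ (0 : Fin 2) ≫ SimplexCategory.δ (1 : Fin 3)
          = SimplexCategory.δ (0 : Fin 2) ≫ SimplexCategory.δ (0 : Fin 3) := by
        ext i; fin_cases i; decide
      rw [h12]
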